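/- arXiv:1306.6453 — 2 statements merged into one kernel-verified Lean document; each statement's English description precedes it below -/
import Mathlib

section
/- For every λ > 0, the operator L := Z₀² + B − λD₀ and the first-order operator V := Σ_{j=0}^{n−2} λ^{n−j} Z_j satisfy the eigenvector relation [L, V] = λV as operators on smooth functions on ℝⁿ. -/
noncomputable section

/-- Operators on functions on `ℝⁿ`. -/
abbrev OpM (n : ℕ) := ((Fin n → ℝ) → ℝ) → (Fin n → ℝ) → ℝ

/-- Commutator `[X,Y] = XY − YX` of operators. -/
def commOp {n : ℕ} (X Y : OpM n) : OpM n := fun f x => X (Y f) x - Y (X f) x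

/-- Partial derivative `∂_{i+1}` (`0`-based index `i`), extended by `0` out of range. -/
noncomputable def pdN (n : ℕ) (i : ℕ) : OpM n := fun f x =>
  if h : i < n then fderiv ℝ f x (Pi.single (⟨i, h⟩ : Fin n) 1) else 0

/-- The `(i+1)`-st coordinate (`0`-based index `i`), extended by `0` out of range. -/
def xc (n : ℕ) (x : Fin n → ℝ) (i : ℕ) : ℝ := if h : i < n then x ⟨i, h⟩ else 0

/-- The field `B = ∂₂ + x₁∂₃ + Σ_{j=3}^{n−1} x_j∂_{j+1}` (`1`-based indices). -/
noncomputable def BFil (n : ℕ) : OpM n := fun f x =>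
  pdN n 1 f x + xc n x 0 * pdN n 2 f x
    + ∑ j ∈ Finset.Icc 3 (n - 1), xc n x (j - 1) * pdN n j f x

/-- The fields `Z₀ = ∂₁`, `Z_{j+1} = [B, Z_j]`. -/
noncomputable def ZFil (n : ℕ) : ℕ → OpM n
  | 0 => pdN n 0
  | j + 1 => commOp (BFil n) (ZFil n j)

/-- The generator `L = Z₀² + B − λD₀` with partial dilation `D₀ = x₁∂₁`. -/
noncomputable def LFil (n : ℕ) (lam : ℝ) : OpM n := fun f x =>
  pdN n 0 (pdN n 0 f) x + BFil n f x - lam * (xc n x 0 * pdN n 0 f x)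

/-- The field `V = Σ_{j=0}^{n−2} λ^{n−j} Z_j`. -/
noncomputable def VFil (n : ℕ) (lam : ℝ) : OpM n := fun f x =>
  ∑ j ∈ Finset.range (n - 1), lam ^ (n - j) * ZFil n j f x

/-! ### Auxiliary lemmas -/

section Aux

variable {n : ℕ}

lemma stop_one : (1 : WithTop ℕ∞) ≤ ((⊤:ℕ∞) : WithTop ℕ∞) := by
  exact_mod_cast (le_top : (1:ℕ∞) ≤ ⊤)

lemma stop_succ : ((⊤:ℕ∞) : WithTop ℕ∞) + 1 ≤ ((⊤:ℕ∞) : WithTop ℕ∞) := by norm_cast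

lemma stop_two : (2 : WithTop ℕ∞) ≤ ((⊤:ℕ∞) : WithTop ℕ∞) := by
  rw [show ((2:WithTop ℕ∞)) = (((2:ℕ∞)):WithTop ℕ∞) from rfl]
  exact_mod_cast (le_top : (2:ℕ∞) ≤ ⊤)

/-- Abbreviation for smoothness. -/
def Sm {n : ℕ} (g : (Fin n → ℝ) → ℝ) : Prop := ContDiff ℝ (⊤:ℕ∞) g

lemma Sm.diffAt {g : (Fin n → ℝ) → ℝ} (hg : Sm g) {x} : DifferentiableAt ℝ g x :=
  (hg.differentiable (by simp)).differentiableAt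

lemma contDiff_xc (k : ℕ) : Sm (fun x : Fin n → ℝ => xc n x k) := by
  unfold Sm xc
  by_cases h : k < n
  · simp only [dif_pos h]
    exact (ContinuousLinearMap.proj (⟨k, h⟩ : Fin n) : (Fin n → ℝ) →L[ℝ] ℝ).contDiff
  · simp only [dif_neg h]; exact contDiff_const

lemma pdN_smooth {f : (Fin n → ℝ) → ℝ} (i : ℕ) (hf : Sm f) : Sm (pdN n i f) := by
  unfold Sm pdN
  by_cases h : i < n
  · simp only [dif_pos h]
    exact (ContinuousLinearMap.apply ℝ ℝ (Pi.single (⟨i, h⟩ : Fin n) (1:ℝ))).contDiff.comp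
      (hf.fderiv_right stop_succ)
  · simp only [dif_neg h]; exact contDiff_const

lemma pdN_const (i : ℕ) (c : ℝ) (x : Fin n → ℝ) : pdN n i (fun _ => c) x = 0 := by
  unfold pdN
  by_cases h : i < n
  · simp only [dif_pos h, fderiv_const]
    simp
  · simp only [dif_neg h]

lemma pdN_add {f g : (Fin n → ℝ) → ℝ} {x} (i : ℕ)
    (hf : DifferentiableAt ℝ f x) (hg : DifferentiableAt ℝ g x) :
    pdN n i (fun y => f y + g y) x = pdN n i f x + pdN n i g x := by
  unfold pdN
  by_cases h : i < n
  · simp only [dif_pos h, fderiv_fun_add hf hg, ContinuousLinearMap.add_apply]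
  · simp only [dif_neg h, add_zero]

lemma pdN_sub {f g : (Fin n → ℝ) → ℝ} {x} (i : ℕ)
    (hf : DifferentiableAt ℝ f x) (hg : DifferentiableAt ℝ g x) :
    pdN n i (fun y => f y - g y) x = pdN n i f x - pdN n i g x := by
  unfold pdN
  by_cases h : i < n
  · simp only [dif_pos h, fderiv_fun_sub hf hg, ContinuousLinearMap.sub_apply]
  · simp only [dif_neg h, sub_zero]

lemma pdN_const_mul (i : ℕ) (c : ℝ) {g : (Fin n → ℝ) → ℝ} {x}
    (hg : DifferentiableAt ℝ g x) :
    pdN n i (fun y => c * g y) x = c * pdN n i g x := by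
  unfold pdN
  by_cases h : i < n
  · simp only [dif_pos h, fderiv_const_mul hg c, ContinuousLinearMap.smul_apply, smul_eq_mul]
  · simp only [dif_neg h, mul_zero]

lemma pdN_sum {ι : Type*} (s : Finset ι) (F : ι → (Fin n → ℝ) → ℝ) {x} (i : ℕ)
    (hF : ∀ j ∈ s, DifferentiableAt ℝ (F j) x) :
    pdN n i (fun y => ∑ j ∈ s, F j y) x = ∑ j ∈ s, pdN n i (F j) x := by
  unfold pdN
  by_cases h : i < n
  · simp only [dif_pos h, fderiv_fun_sum hF, ContinuousLinearMap.coe_sum', Finset.sum_apply]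
  · simp only [dif_neg h, Finset.sum_const_zero]

lemma pdN_xcMul (i k : ℕ) (hk : k < n) {g : (Fin n → ℝ) → ℝ} {x}
    (hg : DifferentiableAt ℝ g x) :
    pdN n i (fun y => xc n y k * g y) x
      = (if i = k then g x else 0) + xc n x k * pdN n i g x := by
  have hxc : (fun y : Fin n → ℝ => xc n y k)
      = fun y => (ContinuousLinearMap.proj (⟨k, hk⟩ : Fin n) : (Fin n → ℝ) →L[ℝ] ℝ) y := by
    funext y; simp [xc, dif_pos hk]
  have hdxc : DifferentiableAt ℝ (fun y : Fin n → ℝ => xc n y k) x := by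
    rw [hxc]; exact ContinuousLinearMap.differentiableAt _
  unfold pdN
  by_cases h : i < n
  · simp only [dif_pos h]
    rw [fderiv_fun_mul hdxc hg]
    simp only [ContinuousLinearMap.add_apply, ContinuousLinearMap.smul_apply, smul_eq_mul]
    rw [show fderiv ℝ (fun y : Fin n → ℝ => xc n y k) x
        = (ContinuousLinearMap.proj (⟨k, hk⟩ : Fin n) : (Fin n → ℝ) →L[ℝ] ℝ) from by
      rw [hxc]; exact ContinuousLinearMap.fderiv _]
    simp only [ContinuousLinearMap.proj_apply, Pi.single_apply]
    have hiff : ((⟨k, hk⟩ : Fin n) = (⟨i, h⟩ : Fin n)) ↔ (i = k) := by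
      rw [Fin.mk.injEq]; exact eq_comm
    rw [if_congr hiff rfl rfl]
    by_cases hik : i = k
    · simp only [if_pos hik]; ring
    · simp only [if_neg hik]; ring
  · simp only [dif_neg h, mul_zero]
    have : ¬ (i = k) := by omega
    simp [this]

lemma fderiv_apply_const {f : (Fin n → ℝ) → ℝ} (hf : Sm f) (v w : Fin n → ℝ) (x) :
    fderiv ℝ (fun y => fderiv ℝ f y v) x w = fderiv ℝ (fderiv ℝ f) x w v := by
  have h1 : DifferentiableAt ℝ (fderiv ℝ f) x :=
    ((hf.fderiv_right stop_succ).differentiable (by simp)).differentiableAt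
  rw [fderiv_clm_apply h1 (differentiableAt_const v)]
  simp

lemma pdN_comm {f : (Fin n → ℝ) → ℝ} (i j : ℕ) (hf : Sm f) (x) :
    pdN n i (pdN n j f) x = pdN n j (pdN n i f) x := by
  by_cases hi : i < n
  · by_cases hj : j < n
    · have hsym : IsSymmSndFDerivAt ℝ f x := hf.contDiffAt.isSymmSndFDerivAt
          (by rw [minSmoothness_of_isRCLikeNormedField]; exact stop_two)
      have key : ∀ (a b : Fin n → ℝ),
          fderiv ℝ (fun y => fderiv ℝ f y a) x b = fderiv ℝ (fun y => fderiv ℝ f y b) x a := by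
        intro a b
        rw [fderiv_apply_const hf a b x, fderiv_apply_const hf b a x, hsym b a]
      have ei : pdN n i f = fun y => fderiv ℝ f y (Pi.single (⟨i, hi⟩ : Fin n) 1) := by
        funext y; simp [pdN, dif_pos hi]
      have ej : pdN n j f = fun y => fderiv ℝ f y (Pi.single (⟨j, hj⟩ : Fin n) 1) := by
        funext y; simp [pdN, dif_pos hj]
      rw [ei, ej]
      unfold pdN
      rw [dif_pos hi, dif_pos hj]
      exact key _ _
    · have h0 : pdN n j f = fun _ => (0:ℝ) := by funext y; simp [pdN, hj]
      rw [h0, pdN_const]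
      simp [pdN, hj]
  · have h0 : pdN n i f = fun _ => (0:ℝ) := by funext y; simp [pdN, hi]
    rw [h0, pdN_const]
    simp [pdN, hi]

lemma BFil_smooth {f : (Fin n → ℝ) → ℝ} (hf : Sm f) : Sm (BFil n f) := by
  unfold Sm BFil
  refine ContDiff.add (ContDiff.add (pdN_smooth 1 hf) ?_) ?_
  · exact (contDiff_xc 0).mul (pdN_smooth 2 hf)
  · exact ContDiff.sum fun j hj => (contDiff_xc (j-1)).mul (pdN_smooth j hf)

lemma pdN_BFil (hn : 4 ≤ n) {f : (Fin n → ℝ) → ℝ} (hf : Sm f) (i : ℕ) (x) :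
    pdN n i (BFil n f) x
      = BFil n (pdN n i f) x + (if i = 0 then pdN n 2 f x else 0)
        + (if i + 1 ∈ Finset.Icc 3 (n-1) then pdN n (i+1) f x else 0) := by
  have hd : ∀ k : ℕ, DifferentiableAt ℝ (pdN n k f) x := fun k => (pdN_smooth k hf).diffAt
  have hd2 : DifferentiableAt ℝ (fun y => xc n y 0 * pdN n 2 f y) x :=
    Sm.diffAt ((contDiff_xc 0).mul (pdN_smooth 2 hf))
  have hdm : ∀ j ∈ Finset.Icc 3 (n-1),
      DifferentiableAt ℝ (fun y => xc n y (j-1) * pdN n j f y) x := fun j hj =>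
    Sm.diffAt ((contDiff_xc (j-1)).mul (pdN_smooth j hf))
  have hds : DifferentiableAt ℝ
      (fun y => ∑ j ∈ Finset.Icc 3 (n-1), xc n y (j-1) * pdN n j f y) x :=
    DifferentiableAt.fun_sum hdm
  have step : pdN n i (BFil n f) x
      = (pdN n i (pdN n 1 f) x + pdN n i (fun y => xc n y 0 * pdN n 2 f y) x)
        + ∑ j ∈ Finset.Icc 3 (n-1), pdN n i (fun y => xc n y (j-1) * pdN n j f y) x := by
    rw [show BFil n f = fun y => (pdN n 1 f y + xc n y 0 * pdN n 2 f y)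
        + ∑ j ∈ Finset.Icc 3 (n-1), xc n y (j-1) * pdN n j f y from rfl]
    rw [pdN_add (f := fun y => pdN n 1 f y + xc n y 0 * pdN n 2 f y) i ((hd 1).add hd2) hds, pdN_add i (hd 1) hd2,
      pdN_sum (Finset.Icc 3 (n-1)) _ i hdm]
  rw [step, pdN_comm i 1 hf x, pdN_xcMul i 0 (by omega) (hd 2), pdN_comm i 2 hf x]
  have sumstep : ∀ j ∈ Finset.Icc 3 (n-1),
      pdN n i (fun y => xc n y (j-1) * pdN n j f y) x
        = (if j = i + 1 then pdN n j f x else 0) + xc n x (j-1) * pdN n j (pdN n i f) x := by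
    intro j hj
    simp only [Finset.mem_Icc] at hj
    rw [pdN_xcMul i (j-1) (by omega) (hd j), pdN_comm i j hf x]
    congr 1
    rw [if_congr (by omega : i = j - 1 ↔ j = i + 1) rfl rfl]
  rw [Finset.sum_congr rfl sumstep, Finset.sum_add_distrib,
    Finset.sum_ite_eq' (Finset.Icc 3 (n-1)) (i+1) (fun j => pdN n j f x)]
  show _ = BFil n (pdN n i f) x + _ + _
  unfold BFil
  ring

lemma commOp_B_pd (hn : 4 ≤ n) {f : (Fin n → ℝ) → ℝ} (hf : Sm f) (i : ℕ) (x) :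
    BFil n (pdN n i f) x - pdN n i (BFil n f) x
      = -((if i = 0 then pdN n 2 f x else 0)
          + (if i + 1 ∈ Finset.Icc 3 (n-1) then pdN n (i+1) f x else 0)) := by
  rw [pdN_BFil hn hf i x]; ring

/-- Explicit form of the iterated brackets. -/
noncomputable def zval (n j : ℕ) : OpM n := fun f x =>
  if j = 0 then pdN n 0 f x
  else if j ≤ n - 2 then (-1:ℝ)^j * pdN n (j+1) f x else 0

lemma zval_smooth (j : ℕ) {f : (Fin n → ℝ) → ℝ} (hf : Sm f) : Sm (zval n j f) := by
  unfold zval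
  by_cases h0 : j = 0
  · simp only [h0, if_pos rfl]; exact pdN_smooth 0 hf
  · simp only [if_neg h0]
    by_cases h2 : j ≤ n - 2
    · simp only [if_pos h2]; exact contDiff_const.mul (pdN_smooth (j+1) hf)
    · simp only [if_neg h2]; exact contDiff_const

lemma BFil_zero (x : Fin n → ℝ) : BFil n (fun _ => (0:ℝ)) x = 0 := by
  simp [BFil, pdN_const]

lemma BFil_const_mul (c : ℝ) {g : (Fin n → ℝ) → ℝ} (hg : Sm g) (x) :
    BFil n (fun y => c * g y) x = c * BFil n g x := by
  unfold BFil
  have e1 : ∑ j ∈ Finset.Icc 3 (n-1), xc n x (j-1) * pdN n j (fun y => c * g y) x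
      = ∑ j ∈ Finset.Icc 3 (n-1), xc n x (j-1) * (c * pdN n j g x) :=
    Finset.sum_congr rfl fun j _ => by rw [pdN_const_mul j c hg.diffAt]
  rw [pdN_const_mul 1 c hg.diffAt, pdN_const_mul 2 c hg.diffAt, e1,
    show (∑ j ∈ Finset.Icc 3 (n-1), xc n x (j-1) * (c * pdN n j g x))
      = c * ∑ j ∈ Finset.Icc 3 (n-1), xc n x (j-1) * pdN n j g x from by
        rw [Finset.mul_sum]; exact Finset.sum_congr rfl fun j hj => by ring]
  ring

lemma ZFil_eq (hn : 4 ≤ n) (j : ℕ) :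
    ∀ f : (Fin n → ℝ) → ℝ, Sm f → ZFil n j f = zval n j f := by
  induction j with
  | zero =>
    intro f hf
    funext x
    simp [ZFil, zval]
  | succ j ih =>
    intro f hf
    funext x
    show BFil n (ZFil n j f) x - ZFil n j (BFil n f) x = zval n (j+1) f x
    rw [ih f hf, ih (BFil n f) (BFil_smooth hf)]
    by_cases h0 : j = 0
    · subst h0
      have e1 : zval n 0 f = pdN n 0 f := by funext y; simp [zval]
      have e2 : zval n 0 (BFil n f) x = pdN n 0 (BFil n f) x := by simp [zval]
      rw [e1, e2, commOp_B_pd hn hf 0 x]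
      have hni : (0:ℕ) + 1 ∉ Finset.Icc 3 (n-1) := by
        simp only [Finset.mem_Icc]; omega
      have h12 : (1:ℕ) ≤ n - 2 := by omega
      rw [if_pos rfl, if_neg hni]
      simp [zval, h12]
    · by_cases h2 : j ≤ n - 2
      · have e1 : zval n j f = fun y => (-1:ℝ)^j * pdN n (j+1) f y := by
          funext y; simp [zval, h0, h2]
        have e2 : zval n j (BFil n f) x = (-1:ℝ)^j * pdN n (j+1) (BFil n f) x := by
          simp [zval, h0, h2]
        rw [e1, e2, BFil_const_mul ((-1:ℝ)^j) (pdN_smooth (j+1) hf) x,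
          show (-1:ℝ)^j * BFil n (pdN n (j+1) f) x
              - (-1:ℝ)^j * pdN n (j+1) (BFil n f) x
            = (-1:ℝ)^j * (BFil n (pdN n (j+1) f) x - pdN n (j+1) (BFil n f) x) from by ring,
          commOp_B_pd hn hf (j+1) x]
        rw [if_neg (by omega : ¬ (j+1 = 0)), zero_add]
        by_cases h3 : j + 1 ≤ n - 2
        · have hin : (j+1)+1 ∈ Finset.Icc 3 (n-1) := by
            simp only [Finset.mem_Icc]; omega
          rw [if_pos hin]
          simp only [zval, if_neg (by omega : ¬ (j+1 = 0)), if_pos h3]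
          rw [pow_succ]
          ring
        · have hin : (j+1)+1 ∉ Finset.Icc 3 (n-1) := by
            simp only [Finset.mem_Icc]; omega
          rw [if_neg hin]
          simp only [zval, if_neg (by omega : ¬ (j+1 = 0)), if_neg h3]
          ring
      · have e1 : zval n j f = fun _ => (0:ℝ) := by funext y; simp [zval, h0, h2]
        have e2 : zval n j (BFil n f) x = 0 := by simp [zval, h0, h2]
        rw [e1, e2, BFil_zero]
        simp [zval, show ¬ (j + 1 ≤ n - 2) by omega]

lemma LFil_const_mul (lam c : ℝ) {g : (Fin n → ℝ) → ℝ} (hg : Sm g) (x) :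
    LFil n lam (fun y => c * g y) x = c * LFil n lam g x := by
  unfold LFil
  have h1 : pdN n 0 (fun y => c * g y) = fun y => c * pdN n 0 g y := by
    funext y; exact pdN_const_mul 0 c hg.diffAt
  rw [h1, pdN_const_mul 0 c (pdN_smooth 0 hg).diffAt, BFil_const_mul c hg x]
  ring

lemma LFil_smooth (lam : ℝ) {f : (Fin n → ℝ) → ℝ} (hf : Sm f) : Sm (LFil n lam f) := by
  unfold Sm LFil
  refine ContDiff.sub (ContDiff.add (pdN_smooth 0 (pdN_smooth 0 hf)) (BFil_smooth hf)) ?_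
  exact contDiff_const.mul ((contDiff_xc 0).mul (pdN_smooth 0 hf))

lemma commOp_L_pd (hn : 4 ≤ n) (lam : ℝ) {f : (Fin n → ℝ) → ℝ} (hf : Sm f) (i : ℕ) (x) :
    LFil n lam (pdN n i f) x - pdN n i (LFil n lam f) x
      = (BFil n (pdN n i f) x - pdN n i (BFil n f) x)
        + lam * (if i = 0 then pdN n 0 f x else 0) := by
  have hd : ∀ k : ℕ, DifferentiableAt ℝ (pdN n k f) x := fun k => (pdN_smooth k hf).diffAt
  have hd00 : DifferentiableAt ℝ (pdN n 0 (pdN n 0 f)) x :=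
    (pdN_smooth 0 (pdN_smooth 0 hf)).diffAt
  have hdB : DifferentiableAt ℝ (BFil n f) x := (BFil_smooth hf).diffAt
  have hdD : DifferentiableAt ℝ (fun y => xc n y 0 * pdN n 0 f y) x :=
    Sm.diffAt ((contDiff_xc 0).mul (pdN_smooth 0 hf))
  have step : pdN n i (LFil n lam f) x
      = pdN n i (pdN n 0 (pdN n 0 f)) x + pdN n i (BFil n f) x
        - lam * ((if i = 0 then pdN n 0 f x else 0) + xc n x 0 * pdN n i (pdN n 0 f) x) := by
    rw [show LFil n lam f = fun y => (pdN n 0 (pdN n 0 f) y + BFil n f y)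
        - lam * (xc n y 0 * pdN n 0 f y) from rfl]
    rw [pdN_sub (f := fun y => pdN n 0 (pdN n 0 f) y + BFil n f y)
        (g := fun y => lam * (xc n y 0 * pdN n 0 f y)) i (hd00.add hdB) (hdD.const_mul lam), pdN_add i hd00 hdB,
      pdN_const_mul i lam hdD, pdN_xcMul i 0 (by omega) (hd 0)]
  have hcomm1 : pdN n i (pdN n 0 f) = pdN n 0 (pdN n i f) := by
    funext y; exact pdN_comm i 0 hf y
  have hcomm2 : pdN n i (pdN n 0 (pdN n 0 f)) x = pdN n 0 (pdN n 0 (pdN n i f)) x := by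
    rw [pdN_comm i 0 (pdN_smooth 0 hf) x, hcomm1]
  rw [step, hcomm2, hcomm1]
  show pdN n 0 (pdN n 0 (pdN n i f)) x + BFil n (pdN n i f) x
      - lam * (xc n x 0 * pdN n 0 (pdN n i f) x) - _ = _
  ring

lemma comm_L_zval (hn : 4 ≤ n) (lam : ℝ) {f : (Fin n → ℝ) → ℝ} (hf : Sm f)
    (j : ℕ) (hj : j < n - 1) (x) :
    LFil n lam (zval n j f) x - zval n j (LFil n lam f) x
      = zval n (j+1) f x + (if j = 0 then lam * pdN n 0 f x else 0) := by
  by_cases h0 : j = 0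
  · subst h0
    have e1 : zval n 0 f = pdN n 0 f := by funext y; simp [zval]
    have e2 : zval n 0 (LFil n lam f) x = pdN n 0 (LFil n lam f) x := by simp [zval]
    rw [e1, e2, commOp_L_pd hn lam hf 0 x, commOp_B_pd hn hf 0 x]
    have hni : (0:ℕ) + 1 ∉ Finset.Icc 3 (n-1) := by
      simp only [Finset.mem_Icc]; omega
    have h12 : (1:ℕ) ≤ n - 2 := by omega
    rw [if_neg hni]
    simp only [if_pos rfl, zval, zero_add, add_zero]
    simp [h12]
  · have h2 : j ≤ n - 2 := by omega
    have e1 : zval n j f = fun y => (-1:ℝ)^j * pdN n (j+1) f y := by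
      funext y; simp [zval, h0, h2]
    have e2 : zval n j (LFil n lam f) x = (-1:ℝ)^j * pdN n (j+1) (LFil n lam f) x := by
      simp [zval, h0, h2]
    rw [e1, e2, LFil_const_mul lam ((-1:ℝ)^j) (pdN_smooth (j+1) hf) x,
      show (-1:ℝ)^j * LFil n lam (pdN n (j+1) f) x
          - (-1:ℝ)^j * pdN n (j+1) (LFil n lam f) x
        = (-1:ℝ)^j * (LFil n lam (pdN n (j+1) f) x - pdN n (j+1) (LFil n lam f) x) from by
          ring,
      commOp_L_pd hn lam hf (j+1) x, commOp_B_pd hn hf (j+1) x]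
    rw [if_neg (by omega : ¬ (j+1 = 0)), if_neg (by omega : ¬ (j+1 = 0)), if_neg h0]
    by_cases h3 : j + 1 ≤ n - 2
    · have hin : (j+1)+1 ∈ Finset.Icc 3 (n-1) := by simp only [Finset.mem_Icc]; omega
      rw [if_pos hin]
      simp only [zval, if_neg (by omega : ¬ (j+1 = 0)), if_pos h3]
      rw [pow_succ]
      ring
    · have hin : (j+1)+1 ∉ Finset.Icc 3 (n-1) := by simp only [Finset.mem_Icc]; omega
      rw [if_neg hin]
      simp only [zval, if_neg (by omega : ¬ (j+1 = 0)), if_neg h3]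
      ring

lemma BFil_sum (lam : ℝ) (s : Finset ℕ) (c : ℕ → ℝ)
    (g : ℕ → (Fin n → ℝ) → ℝ) (hg : ∀ j ∈ s, Sm (g j)) (x) :
    BFil n (fun y => ∑ j ∈ s, c j * g j y) x = ∑ j ∈ s, c j * BFil n (g j) x := by
  have hs : ∀ (k : ℕ) (x' : Fin n → ℝ), pdN n k (fun y => ∑ j ∈ s, c j * g j y) x'
      = ∑ j ∈ s, c j * pdN n k (g j) x' := by
    intro k x'
    rw [pdN_sum s _ k (fun j hj => Sm.diffAt (contDiff_const.mul (hg j hj)))]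
    exact Finset.sum_congr rfl fun j hj => pdN_const_mul k (c j) (hg j hj).diffAt
  unfold BFil
  have e1 : ∑ i ∈ Finset.Icc 3 (n-1), xc n x (i-1) * pdN n i (fun y => ∑ j ∈ s, c j * g j y) x
      = ∑ i ∈ Finset.Icc 3 (n-1), xc n x (i-1) * (∑ j ∈ s, c j * pdN n i (g j) x) :=
    Finset.sum_congr rfl fun i _ => by rw [hs i x]
  rw [hs 1 x, hs 2 x, e1]
  have hdouble : ∑ i ∈ Finset.Icc 3 (n-1), xc n x (i-1) * (∑ j ∈ s, c j * pdN n i (g j) x)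
      = ∑ j ∈ s, c j * ∑ i ∈ Finset.Icc 3 (n-1), xc n x (i-1) * pdN n i (g j) x := by
    calc ∑ i ∈ Finset.Icc 3 (n-1), xc n x (i-1) * (∑ j ∈ s, c j * pdN n i (g j) x)
        = ∑ i ∈ Finset.Icc 3 (n-1), ∑ j ∈ s, xc n x (i-1) * (c j * pdN n i (g j) x) :=
          Finset.sum_congr rfl fun i _ => Finset.mul_sum _ _ _
      _ = ∑ j ∈ s, ∑ i ∈ Finset.Icc 3 (n-1), xc n x (i-1) * (c j * pdN n i (g j) x) :=
          Finset.sum_comm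
      _ = ∑ j ∈ s, c j * ∑ i ∈ Finset.Icc 3 (n-1), xc n x (i-1) * pdN n i (g j) x := by
          refine Finset.sum_congr rfl fun j _ => ?_
          rw [Finset.mul_sum]
          exact Finset.sum_congr rfl fun i _ => by ring
  rw [hdouble,
    show xc n x 0 * ∑ j ∈ s, c j * pdN n 2 (g j) x
      = ∑ j ∈ s, xc n x 0 * (c j * pdN n 2 (g j) x) from Finset.mul_sum _ _ _,
    ← Finset.sum_add_distrib, ← Finset.sum_add_distrib]
  exact Finset.sum_congr rfl fun j _ => by ring

lemma LFil_sum (lam : ℝ) (s : Finset ℕ) (c : ℕ → ℝ)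
    (g : ℕ → (Fin n → ℝ) → ℝ) (hg : ∀ j ∈ s, Sm (g j)) (x) :
    LFil n lam (fun y => ∑ j ∈ s, c j * g j y) x = ∑ j ∈ s, c j * LFil n lam (g j) x := by
  have hs : ∀ (k : ℕ) (x' : Fin n → ℝ), pdN n k (fun y => ∑ j ∈ s, c j * g j y) x'
      = ∑ j ∈ s, c j * pdN n k (g j) x' := by
    intro k x'
    rw [pdN_sum s _ k (fun j hj => Sm.diffAt (contDiff_const.mul (hg j hj)))]
    exact Finset.sum_congr rfl fun j hj => pdN_const_mul k (c j) (hg j hj).diffAt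
  have h00 : pdN n 0 (fun y => ∑ j ∈ s, c j * g j y)
      = fun y => ∑ j ∈ s, c j * pdN n 0 (g j) y := by
    funext y; exact hs 0 y
  unfold LFil
  rw [hs 0 x, h00,
    pdN_sum s _ 0 (fun j hj => Sm.diffAt (contDiff_const.mul (pdN_smooth 0 (hg j hj)))),
    Finset.sum_congr rfl (fun j hj => pdN_const_mul 0 (c j) (pdN_smooth 0 (hg j hj)).diffAt),
    BFil_sum lam s c g hg x,
    show xc n x 0 * ∑ j ∈ s, c j * pdN n 0 (g j) x
      = ∑ j ∈ s, xc n x 0 * (c j * pdN n 0 (g j) x) from Finset.mul_sum _ _ _,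
    show lam * ∑ j ∈ s, xc n x 0 * (c j * pdN n 0 (g j) x)
      = ∑ j ∈ s, lam * (xc n x 0 * (c j * pdN n 0 (g j) x)) from Finset.mul_sum _ _ _,
    ← Finset.sum_add_distrib, ← Finset.sum_sub_distrib]
  exact Finset.sum_congr rfl fun j _ => by ring

end Aux

/-- For every `λ > 0`, the eigenvector relation `[L, V] = λV` holds as an identity of
operators on smooth functions on `ℝⁿ`. -/
theorem filiform_partial_dilation_eigenfield (n : ℕ) (hn : 4 ≤ n)
    (lam : ℝ) (hlam : 0 < lam) :
    ∀ f : (Fin n → ℝ) → ℝ, ContDiff ℝ (⊤ : ℕ∞) f → ∀ x,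
      commOp (LFil n lam) (VFil n lam) f x = lam * VFil n lam f x := by
  intro f hf x
  have hsf : Sm f := hf
  have hLf : Sm (LFil n lam f) := LFil_smooth lam hsf
  have hVf : ∀ y, VFil n lam f y
      = ∑ j ∈ Finset.range (n-1), lam^(n-j) * zval n j f y := by
    intro y; unfold VFil
    exact Finset.sum_congr rfl fun j hj => by rw [ZFil_eq hn j f hsf]
  have hVL : VFil n lam (LFil n lam f) x
      = ∑ j ∈ Finset.range (n-1), lam^(n-j) * zval n j (LFil n lam f) x := by
    unfold VFil
    exact Finset.sum_congr rfl fun j hj => by rw [ZFil_eq hn j _ hLf]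
  have hLV : LFil n lam (VFil n lam f) x
      = ∑ j ∈ Finset.range (n-1), lam^(n-j) * LFil n lam (zval n j f) x := by
    rw [funext hVf]
    exact LFil_sum lam _ _ _ (fun j _ => zval_smooth j hsf) x
  show LFil n lam (VFil n lam f) x - VFil n lam (LFil n lam f) x = lam * VFil n lam f x
  rw [hLV, hVL, hVf x, ← Finset.sum_sub_distrib]
  have step1 : ∀ j ∈ Finset.range (n-1),
      lam^(n-j) * LFil n lam (zval n j f) x - lam^(n-j) * zval n j (LFil n lam f) x
        = lam^(n+1-(j+1)) * zval n (j+1) f x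
          + (if j = 0 then lam^(n+1) * pdN n 0 f x else 0) := by
    intro j hj
    simp only [Finset.mem_range] at hj
    rw [show lam^(n-j) * LFil n lam (zval n j f) x - lam^(n-j) * zval n j (LFil n lam f) x
        = lam^(n-j) * (LFil n lam (zval n j f) x - zval n j (LFil n lam f) x) from by ring,
      comm_L_zval hn lam hsf j hj x,
      show n+1-(j+1) = n-j from by omega]
    by_cases h0 : j = 0
    · subst h0
      rw [if_pos rfl, if_pos rfl]
      simp only [Nat.sub_zero]
      rw [pow_succ]
      ring
    · rw [if_neg h0, if_neg h0]; ring
  rw [Finset.sum_congr rfl step1, Finset.sum_add_distrib,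
    Finset.sum_ite_eq' (Finset.range (n-1)) 0 (fun _ => lam^(n+1) * pdN n 0 f x),
    if_pos (Finset.mem_range.mpr (by omega : 0 < n - 1))]
  have hz0 : zval n 0 f x = pdN n 0 f x := by simp [zval]
  have hzn : zval n (n-1) f x = 0 := by
    have h0 : ¬ (n - 1 = 0) := by omega
    have h2 : ¬ (n - 1 ≤ n - 2) := by omega
    simp [zval, h0, h2]
  have key : (∑ j ∈ Finset.range (n-1), lam^(n+1-(j+1)) * zval n (j+1) f x)
      + lam^(n+1) * pdN n 0 f x
      = ∑ j ∈ Finset.range n, lam^(n+1-j) * zval n j f x := by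
    have h' := Finset.sum_range_succ' (fun k => lam^(n+1-k) * zval n k f x) (n-1)
    rw [show n-1+1 = n from by omega] at h'
    rw [← hz0, show lam^(n+1) * zval n 0 f x = lam^(n+1-0) * zval n 0 f x from by
      rw [Nat.sub_zero]]
    exact h'.symm
  rw [key]
  have split := Finset.sum_range_succ (fun k => lam^(n+1-k) * zval n k f x) (n-1)
  rw [show n-1+1 = n from by omega] at split
  rw [split, hzn, mul_zero, add_zero, Finset.mul_sum]
  refine Finset.sum_congr rfl fun j hj => ?_
  have hjn : j < n - 1 := Finset.mem_range.mp hj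
  rw [show n+1-j = (n-j)+1 from by omega, pow_succ]
  ring
end
end

section
/- For every λ, ξ > 0, setting κ := √(2λ/ξ) and V := κ∂_x + κ⁻¹∂_z, one has the eigenvector relation [V, L] = −λV as operators on smooth functions on ℝ³. -/
noncomputable section

/-- `ℝ³` with coordinates `(x, y, z) = (w 0, w 1, w 2)`. -/
abbrev Vec3 := Fin 3 → ℝ

/-- Partial derivative in the `i`-th coordinate direction. -/
noncomputable def pd3 (i : Fin 3) (f : Vec3 → ℝ) (w : Vec3) : ℝ :=
  fderiv ℝ f w (Pi.single i 1)

/-- The Heisenberg field `Z₀ = ∂_x + (y/2)∂_z`. -/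
noncomputable def Zh0 (f : Vec3 → ℝ) (w : Vec3) : ℝ :=
  pd3 0 f w + w 1 / 2 * pd3 2 f w

/-- The Heisenberg field `B = ∂_y − (x/2)∂_z`. -/
noncomputable def Bh (f : Vec3 → ℝ) (w : Vec3) : ℝ :=
  pd3 1 f w - w 0 / 2 * pd3 2 f w

/-- The partial dilation `D₀ = x∂_x`. -/
noncomputable def D0h (f : Vec3 → ℝ) (w : Vec3) : ℝ := w 0 * pd3 0 f w

/-- The generator `L = Z₀² + ξB − λD₀`. -/
noncomputable def Lh (ξ lam : ℝ) (f : Vec3 → ℝ) (w : Vec3) : ℝ :=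
  Zh0 (Zh0 f) w + ξ * Bh f w - lam * D0h f w

@[fun_prop] lemma pd3_contDiff {f : Vec3 → ℝ} (hf : ContDiff ℝ (⊤:ℕ∞) f) (i : Fin 3) :
    ContDiff ℝ (⊤:ℕ∞) (pd3 i f) := by
  exact (contDiff_infty_iff_fderiv.mp hf).2.clm_apply contDiff_const

@[fun_prop] lemma pd3_differentiable {f : Vec3 → ℝ} (hf : ContDiff ℝ (⊤:ℕ∞) f) (i : Fin 3) :
    Differentiable ℝ (pd3 i f) := (pd3_contDiff hf i).differentiable (by simp)

variable {f u v : Vec3 → ℝ} {i j : Fin 3} {w : Vec3} {c : ℝ}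

lemma pd3_add (hu : DifferentiableAt ℝ u w) (hv : DifferentiableAt ℝ v w) :
    pd3 i (fun w => u w + v w) w = pd3 i u w + pd3 i v w := by
  unfold pd3; rw [fderiv_fun_add hu hv]; rfl

lemma pd3_sub (hu : DifferentiableAt ℝ u w) (hv : DifferentiableAt ℝ v w) :
    pd3 i (fun w => u w - v w) w = pd3 i u w - pd3 i v w := by
  unfold pd3; rw [fderiv_fun_sub hu hv]; rfl

lemma pd3_mul (hu : DifferentiableAt ℝ u w) (hv : DifferentiableAt ℝ v w) :
    pd3 i (fun w => u w * v w) w = pd3 i u w * v w + u w * pd3 i v w := by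
  unfold pd3; rw [fderiv_fun_mul hu hv]; simp; ring

lemma pd3_div_const (hu : DifferentiableAt ℝ u w) :
    pd3 i (fun w => u w / c) w = pd3 i u w / c := by
  simp only [div_eq_inv_mul]
  unfold pd3; rw [fderiv_const_mul hu]; simp

lemma pd3_const : pd3 i (fun _ => c) w = 0 := by
  unfold pd3; rw [fderiv_fun_const]; rfl

lemma pd3_coord : pd3 i (fun w : Vec3 => w j) w = if j = i then 1 else 0 := by
  unfold pd3
  rw [show (fun w : Vec3 => w j) = ((ContinuousLinearMap.proj j : Vec3 →L[ℝ] ℝ) : Vec3 → ℝ) from rfl,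
    ContinuousLinearMap.fderiv]
  simp [Pi.single_apply]

lemma pd3_comm (hf : ContDiff ℝ (⊤:ℕ∞) f) (i j : Fin 3) :
    pd3 i (pd3 j f) = pd3 j (pd3 i f) := by
  funext w
  have hdf : Differentiable ℝ f := hf.differentiable (by simp)
  have hΦ : ContDiff ℝ (⊤:ℕ∞) (fderiv ℝ f) := (contDiff_infty_iff_fderiv.mp hf).2
  have hΦw : HasFDerivAt (fderiv ℝ f) (fderiv ℝ (fderiv ℝ f) w) w :=
    (hΦ.differentiable (by simp) w).hasFDerivAt
  have key : ∀ a b : Vec3, fderiv ℝ (fderiv ℝ f) w a b = fderiv ℝ (fderiv ℝ f) w b a :=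
    second_derivative_symmetric (fun y => (hdf y).hasFDerivAt) hΦw
  have expand : ∀ (k : Fin 3) (a : Vec3), pd3 k (fun y => fderiv ℝ f y a) w = fderiv ℝ (fderiv ℝ f) w (Pi.single k 1) a := by
    intro k a
    unfold pd3
    have : HasFDerivAt (fun y => fderiv ℝ f y a)
        ((ContinuousLinearMap.apply ℝ ℝ a).comp (fderiv ℝ (fderiv ℝ f) w)) w :=
      (ContinuousLinearMap.apply ℝ ℝ a).hasFDerivAt.comp w hΦw
    rw [this.fderiv]; rfl
  show pd3 i (fun y => fderiv ℝ f y (Pi.single j 1)) w = pd3 j (fun y => fderiv ℝ f y (Pi.single i 1)) w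
  rw [expand i, expand j, key]

lemma pd3_comm10 (hf : ContDiff ℝ (⊤:ℕ∞) f) : pd3 1 (pd3 0 f) = pd3 0 (pd3 1 f) := pd3_comm hf 1 0
lemma pd3_comm20 (hf : ContDiff ℝ (⊤:ℕ∞) f) : pd3 2 (pd3 0 f) = pd3 0 (pd3 2 f) := pd3_comm hf 2 0
lemma pd3_comm21 (hf : ContDiff ℝ (⊤:ℕ∞) f) : pd3 2 (pd3 1 f) = pd3 1 (pd3 2 f) := pd3_comm hf 2 1

/-- The field `V = κ∂_x + κ⁻¹∂_z` with `κ = √(2λ/ξ)`. -/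
noncomputable def Vh (ξ lam : ℝ) (f : Vec3 → ℝ) (w : Vec3) : ℝ :=
  Real.sqrt (2 * lam / ξ) * pd3 0 f w + (Real.sqrt (2 * lam / ξ))⁻¹ * pd3 2 f w

/-- For every `λ, ξ > 0`, the eigenvector relation `[V, L] = −λV` holds as an identity
of operators on smooth functions on `ℝ³`. -/
theorem heisenberg_eigenfield (ξ lam : ℝ) (hξ : 0 < ξ) (hlam : 0 < lam) :
    ∀ f : Vec3 → ℝ, ContDiff ℝ (⊤ : ℕ∞) f → ∀ w : Vec3,
      Vh ξ lam (Lh ξ lam f) w - Lh ξ lam (Vh ξ lam f) w = -lam * Vh ξ lam f w := by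
  intro f hf w
  delta Vh Lh Zh0 Bh D0h
  simp (disch := fun_prop) only [pd3_add, pd3_sub, pd3_mul, pd3_div_const, pd3_const, pd3_coord,
    pd3_comm10, pd3_comm20, pd3_comm21]
  have hpos : (0:ℝ) < 2 * lam / ξ := by positivity
  have hk0 : Real.sqrt (2 * lam / ξ) ≠ 0 := by positivity
  have hk2 : Real.sqrt (2 * lam / ξ) * Real.sqrt (2 * lam / ξ) = 2 * lam / ξ :=
    Real.mul_self_sqrt hpos.le
  have hkinv : (Real.sqrt (2 * lam / ξ))⁻¹ = Real.sqrt (2 * lam / ξ) * ξ / (2 * lam) := by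
    rw [eq_div_iff (by positivity : (2:ℝ) * lam ≠ 0), inv_mul_eq_iff_eq_mul₀ hk0,
      ← mul_assoc, hk2]
    field_simp
  norm_num [hkinv, Fin.ext_iff]
  linear_combination (ξ * Real.sqrt (2 * lam / ξ) * pd3 2 f w * (1/2)) *
    (mul_inv_cancel₀ hlam.ne' : lam * lam⁻¹ = 1)
end
end
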